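/- Let g be osp(1|2n)^{(1)} or sl(1|2n)^{(2)}. The assignments γ^{1/2} ↦ −√−1·γ^{1/2} (so γ ↦ −γ), ξ⁺_{i,k} ↦ ξ⁺_{i,k}, ξ⁻_{i,k} ↦ (−1)^k ξ⁻_{i,k}, γ_i^{±1} ↦ γ_i^{±1}, κ_{i,k} ↦ (√−1)^{|k|} κ_{i,k} (for all 1≤i≤n, k∈ℤ, k≠0 where relevant) extend to a K-superalgebra automorphism of the Drinfeld superalgebra U_q^D(g); under this automorphism κ̂⁺_{i,k} ↦ (√−1)^{k} κ̂⁺_{i,k} and κ̂⁻_{i,−k} ↦ (√−1)^{k} κ̂⁻_{i,−k} for k≥0. -/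

import Mathlib

set_option synthInstance.maxHeartbeats 1000000
set_option maxHeartbeats 1000000

noncomputable section

open scoped BigOperators

/-! ## The base field and basic scalars -/

/-- The base field `K = ℂ(q^{1/2})`. -/
abbrev KK : Type := RatFunc ℂ

/-- `q^{1/2}`. -/
def qh : KK := RatFunc.X

/-- integer powers of `q^{1/2}`. -/
def qpow (m : ℤ) : KK := qh ^ m

/-- a fixed square root of `−1`. -/
def ii : KK := RatFunc.C Complex.I

/-- The three series of affine Lie superalgebras. -/
inductive Gcase : Type
  | osp1  -- osp(1|2n)^{(1)}
  | sl2   -- sl(1|2n)^{(2)}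
  | osp2  -- osp(2|2n)^{(2)}
deriving DecidableEq

/-! ## Root data (normalisation `(α_n, α_n) = 1`), affine indices `0, 1, …, n` -/

/-- The symmetric bilinear form `(α_i, α_j)` on the simple roots, paper indices `0 ≤ i,j ≤ n`. -/
def Bc (c : Gcase) (n : ℕ) (i j : ℕ) : ℤ :=
  if i = j then
    (match c with
      | .osp1 => if i = 0 then 4 else if i = n then 1 else 2
      | .sl2 => if i = n then 1 else 2
      | .osp2 => if i = 0 ∨ i = n then 1 else 2)
  else if i + 1 = j ∨ j + 1 = i then
    (match c with
      | .osp1 => if i = 0 ∨ j = 0 then -2 else -1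
      | .sl2 => if i = 0 ∨ j = 0 then 0 else -1
      | .osp2 => -1)
  else if (i = 0 ∧ j = 2) ∨ (j = 0 ∧ i = 2) then
    (match c with | .sl2 => -1 | _ => 0)
  else 0

/-- Parity of the simple root `α_i` (`1` = odd, `0` = even). -/
def pc (c : Gcase) (n : ℕ) (i : ℕ) : ℕ :=
  match c with
  | .osp2 => if i = 0 ∨ i = n then 1 else 0
  | _ => if i = n then 1 else 0

/-- The structure constants `u_{i,j,r}` of the Drinfeld realisation (paper indices `1 ≤ i,j ≤ n`). -/
def uconst (c : Gcase) (n : ℕ) (i j : ℕ) (r : ℤ) : KK :=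
  match c with
  | .osp1 =>
      if i = n ∧ j = n then qpow (4 * r) - qpow (-(4 * r)) - qpow (2 * r) + qpow (-(2 * r))
      else qpow (2 * r * Bc c n i j) - qpow (-(2 * r * Bc c n i j))
  | .sl2 =>
      if i = n ∧ j = n then ((-1 : KK) ^ r) * (qpow (2 * r) - qpow (-(2 * r)))
      else qpow (2 * r * Bc c n i j) - qpow (-(2 * r * Bc c n i j))
  | .osp2 =>
      if i = n ∧ j = n then ((-1 : KK) ^ r) * (qpow (2 * r) - qpow (-(2 * r)))
      else (1 + (-1 : KK) ^ r) * (qpow (r * Bc c n i j) - qpow (-(r * Bc c n i j)))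

/-! ## The Drinfeld superalgebra `U_q^D(g)` -/

/-- Generators of the Drinfeld superalgebra: `ξ⁺_{i,r}`, `ξ⁻_{i,r}`, `γ_i`, `γ_i⁻¹`, `κ_{i,s}`,
`γ^{1/2}`, `γ^{−1/2}`.  Here `i : Fin n` stands for the paper's index `i + 1 ∈ {1, …, n}`. -/
inductive DGen (n : ℕ) : Type
  | xp : Fin n → ℤ → DGen n
  | xm : Fin n → ℤ → DGen n
  | ga : Fin n → DGen n
  | gai : Fin n → DGen n
  | ka : Fin n → ℤ → DGen n
  | gh : DGen n
  | ghi : DGen n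

/-- The free algebra on the Drinfeld generators. -/
abbrev DF (n : ℕ) : Type := FreeAlgebra KK (DGen n)

def dXp {n : ℕ} (i : Fin n) (r : ℤ) : DF n := FreeAlgebra.ι KK (DGen.xp i r)
def dXm {n : ℕ} (i : Fin n) (r : ℤ) : DF n := FreeAlgebra.ι KK (DGen.xm i r)
def dGa {n : ℕ} (i : Fin n) : DF n := FreeAlgebra.ι KK (DGen.ga i)
def dGai {n : ℕ} (i : Fin n) : DF n := FreeAlgebra.ι KK (DGen.gai i)
def dKa {n : ℕ} (i : Fin n) (s : ℤ) : DF n := FreeAlgebra.ι KK (DGen.ka i s)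
def dGh (n : ℕ) : DF n := FreeAlgebra.ι KK (DGen.gh : DGen n)
def dGhi (n : ℕ) : DF n := FreeAlgebra.ι KK (DGen.ghi : DGen n)

/-- paper index of `i : Fin n`. -/
def pid {n : ℕ} (i : Fin n) : ℕ := (i : ℕ) + 1

def dB (c : Gcase) (n : ℕ) (i j : Fin n) : ℤ := Bc c n (pid i) (pid j)
def du (c : Gcase) (n : ℕ) (i j : Fin n) (r : ℤ) : KK := uconst c n (pid i) (pid j) r
/-- `q_i = q^{(α_i,α_i)/2}`. -/
def dqi (c : Gcase) (n : ℕ) (i : Fin n) : KK := qpow (dB c n i i)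
/-- `q_i − q_i⁻¹`. -/
def dden (c : Gcase) (n : ℕ) (i : Fin n) : KK := dqi c n i - (dqi c n i)⁻¹
/-- parity of `ξ^±_{i,r}`. -/
def dpar (n : ℕ) (i : Fin n) : ℕ := if pid i = n then 1 else 0
/-- the admissible index set `I_g`. -/
def dadm (c : Gcase) (n : ℕ) (i : Fin n) (r : ℤ) : Prop :=
  c ≠ .osp2 ∨ pid i = n ∨ r % 2 = 0
/-- `γ^{m/2}` as a word in the generators `γ^{±1/2}`. -/
def dgampow (n : ℕ) (m : ℤ) : DF n :=
  if 0 ≤ m then (dGh n) ^ m.toNat else (dGhi n) ^ (-m).toNat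

/-- the Cartan integer `a_{ij} = 2(α_i,α_j)/(α_i,α_i)`. -/
def dacart (c : Gcase) (n : ℕ) (i j : Fin n) : ℤ := 2 * dB c n i j / dB c n i i
/-- the shift `θ` in Serre relation (A). -/
def dtheta (c : Gcase) (n : ℕ) (i j : Fin n) : ℤ :=
  match c with
  | .osp2 => if pid i = n ∧ pid j = n then 1 else 2
  | _ => 1

/-- The elements `κ̂⁺_{i,m}`, defined from the `κ`'s by the exponential generating series
`Σ_{m≥0} κ̂⁺_{i,m} u^{−m} = γ_i exp((q_i−q_i⁻¹) Σ_{m>0} κ_{i,m} u^{−m})`, here characterised by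
the equivalent recursion `(m+1) κ̂⁺_{i,m+1} = (q_i−q_i⁻¹) Σ_{r=1}^{m+1} r κ_{i,r} κ̂⁺_{i,m+1−r}`
(valid since the `κ_{i,r}`, `r > 0`, commute), `κ̂⁺_{i,0} = γ_i`. -/
def khatp (c : Gcase) (n : ℕ) (i : Fin n) : ℕ → DF n
  | 0 => dGa i
  | (m + 1) =>
      (((m : KK) + 1))⁻¹ • (dden c n i •
        ∑ r ∈ Finset.range (m + 1),
          (((r : ℕ) + 1 : ℕ) : KK) • (dKa i ((r : ℤ) + 1) * khatp c n i (m - r)))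
  decreasing_by exact Nat.lt_succ_of_le (Nat.sub_le m r)

/-- The elements `κ̂⁻_{i,−m}`, defined by
`Σ_{m≥0} κ̂⁻_{i,−m} u^{m} = γ_i⁻¹ exp((q_i⁻¹−q_i) Σ_{m>0} κ_{i,−m} u^{m})`. -/
def khatm (c : Gcase) (n : ℕ) (i : Fin n) : ℕ → DF n
  | 0 => dGai i
  | (m + 1) =>
      (((m : KK) + 1))⁻¹ • ((-(dden c n i)) •
        ∑ r ∈ Finset.range (m + 1),
          (((r : ℕ) + 1 : ℕ) : KK) • (dKa i (-((r : ℤ) + 1)) * khatm c n i (m - r)))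
  decreasing_by exact Nat.lt_succ_of_le (Nat.sub_le m r)

/-- `κ̂⁺_{i,r}` for `r : ℤ` (zero for `r < 0`). -/
def DKhatP (c : Gcase) (n : ℕ) (i : Fin n) (r : ℤ) : DF n :=
  if 0 ≤ r then khatp c n i r.toNat else 0

/-- `κ̂⁻_{i,r}` for `r : ℤ` (zero for `r > 0`). -/
def DKhatM (c : Gcase) (n : ℕ) (i : Fin n) (r : ℤ) : DF n :=
  if r ≤ 0 then khatm c n i (-r).toNat else 0

/-- the twisted bracket `[x,y]_a = xy − (−1)^{[x][y]} a · yx` for homogeneous `x, y` of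
parities `px, py`. -/
def sbr {n : ℕ} (px py : ℕ) (a : KK) (x y : DF n) : DF n :=
  x * y - (((-1 : KK) ^ (px * py)) * a) • (y * x)

/-- `[m]_z`. -/
def qint (z : KK) (m : ℕ) : KK := (z ^ m - z⁻¹ ^ m) / (z - z⁻¹)
/-- `[m]_z!`. -/
def qfact (z : KK) : ℕ → KK
  | 0 => 1
  | (m + 1) => qint z (m + 1) * qfact z m
/-- the Gaussian binomial coefficient `[N; k]_z`. -/
def qbinom (z : KK) (N k : ℕ) : KK := qfact z N / (qfact z k * qfact z (N - k))

/-- `sym_{r_1,…,r_ℓ} Σ_{k=0}^{ℓ} coef k · A_{r_{σ(1)}} ⋯ A_{r_{σ(k)}} · b · A_{r_{σ(k+1)}} ⋯`. -/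
def serreSum {n : ℕ} (ℓ : ℕ) (A : Fin ℓ → DF n) (b : DF n) (coef : ℕ → KK) : DF n :=
  ∑ σ : Equiv.Perm (Fin ℓ), ∑ k ∈ Finset.range (ℓ + 1),
    coef k • (((List.ofFn fun m => A (σ m)).take k).prod * b *
      ((List.ofFn fun m => A (σ m)).drop k).prod)

/-- The defining relations of the Drinfeld superalgebra `U_q^D(g)` (Definition 2.2 of the
paper).  Non-admissible generators (which occur for `osp(2|2n)^{(2)}`) and the generators
`κ_{i,0}` are set to zero. -/
inductive DRel (c : Gcase) (n : ℕ) : DF n → DF n → Prop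
  | killxp (i : Fin n) (r : ℤ) (h : ¬ dadm c n i r) : DRel c n (dXp i r) 0
  | killxm (i : Fin n) (r : ℤ) (h : ¬ dadm c n i r) : DRel c n (dXm i r) 0
  | killka (i : Fin n) (r : ℤ) (h : ¬ dadm c n i r ∨ r = 0) : DRel c n (dKa i r) 0
  -- `γ^{±1/2}` central, mutually inverse
  | gh_ghi : DRel c n (dGh n * dGhi n) 1
  | ghi_gh : DRel c n (dGhi n * dGh n) 1
  | gh_central (g : DGen n) :
      DRel c n (dGh n * FreeAlgebra.ι KK g) (FreeAlgebra.ι KK g * dGh n)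
  | ghi_central (g : DGen n) :
      DRel c n (dGhi n * FreeAlgebra.ι KK g) (FreeAlgebra.ι KK g * dGhi n)
  -- `γ_i` invertible, mutually commuting
  | ga_gai (i : Fin n) : DRel c n (dGa i * dGai i) 1
  | gai_ga (i : Fin n) : DRel c n (dGai i * dGa i) 1
  | ga_comm (i j : Fin n) : DRel c n (dGa i * dGa j) (dGa j * dGa i)
  | ga_ka (i j : Fin n) (s : ℤ) : DRel c n (dGa i * dKa j s) (dKa j s * dGa i)
  -- `γ_i ξ^±_{j,r} γ_i⁻¹ = q_i^{± a_{ij}} ξ^±_{j,r}`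
  | ga_xp (i j : Fin n) (r : ℤ) :
      DRel c n (dGa i * dXp j r * dGai i) (qpow (2 * dB c n i j) • dXp j r)
  | ga_xm (i j : Fin n) (r : ℤ) :
      DRel c n (dGa i * dXm j r * dGai i) (qpow (-(2 * dB c n i j)) • dXm j r)
  -- `[κ_{i,r}, ξ^±_{j,s}] = (u_{i,j,r} γ^{∓|r|/2} / (r(q_i−q_i⁻¹))) ξ^±_{j,s+r}`
  | ka_xp (i j : Fin n) (r s : ℤ) (hr : r ≠ 0) :
      DRel c n (dKa i r * dXp j s - dXp j s * dKa i r)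
        ((du c n i j r / ((r : KK) * dden c n i)) • (dgampow n (-|r|) * dXp j (s + r)))
  | ka_xm (i j : Fin n) (r s : ℤ) (hr : r ≠ 0) :
      DRel c n (dKa i r * dXm j s - dXm j s * dKa i r)
        ((du c n i j r / ((r : KK) * dden c n i)) • (dgampow n |r| * dXm j (s + r)))
  -- `[κ_{i,r}, κ_{j,s}] = δ_{r+s,0} u_{i,j,r}(γ^r − γ^{−r})/(r(q_i−q_i⁻¹)(q_j−q_j⁻¹))`
  | ka_ka (i j : Fin n) (r s : ℤ) (hr : r ≠ 0) (hs : s ≠ 0) :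
      DRel c n (dKa i r * dKa j s - dKa j s * dKa i r)
        (if s = -r then
          (du c n i j r / ((r : KK) * dden c n i * dden c n j)) •
            (dgampow n (2 * r) - dgampow n (-(2 * r)))
         else 0)
  -- `[ξ⁺_{i,r}, ξ⁻_{j,s}] = δ_{ij}(γ^{(r−s)/2} κ̂⁺_{i,r+s} − γ^{(s−r)/2} κ̂⁻_{i,r+s})/(q_i−q_i⁻¹)`
  | xpxm (i j : Fin n) (r s : ℤ) :
      DRel c n (dXp i r * dXm j s - ((-1 : KK) ^ (dpar n i * dpar n j)) • (dXm j s * dXp i r))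
        (if i = j then
          (dden c n i)⁻¹ •
            (dgampow n (r - s) * DKhatP c n i (r + s) - dgampow n (s - r) * DKhatM c n i (r + s))
         else 0)
  -- Serre relation (A)
  | serreA_p (i j : Fin n) (r s : ℤ) (h : ¬(c = Gcase.osp1 ∧ pid i = n ∧ pid j = n)) :
      DRel c n
        (sbr (dpar n i) (dpar n j) (qpow (2 * dB c n i j)) (dXp i (r + dtheta c n i j)) (dXp j s) +
         sbr (dpar n j) (dpar n i) (qpow (2 * dB c n j i)) (dXp j (s + dtheta c n i j)) (dXp i r)) 0
  | serreA_m (i j : Fin n) (r s : ℤ) (h : ¬(c = Gcase.osp1 ∧ pid i = n ∧ pid j = n)) :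
      DRel c n
        (sbr (dpar n i) (dpar n j) (qpow (2 * dB c n i j)) (dXm i (r - dtheta c n i j)) (dXm j s) +
         sbr (dpar n j) (dpar n i) (qpow (2 * dB c n j i)) (dXm j (s - dtheta c n i j)) (dXm i r)) 0
  -- Serre relation (B)
  | serreB_p (i j : Fin n) (hij : i ≠ j) (hi : pid i ≠ n)
      (rv : Fin (1 - dacart c n i j).toNat → ℤ) (s : ℤ) :
      DRel c n
        (serreSum (1 - dacart c n i j).toNat (fun m => dXp i (rv m)) (dXp j s)
          (fun k => ((-1 : KK) ^ k) * qbinom (dqi c n i) (1 - dacart c n i j).toNat k)) 0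
  | serreB_m (i j : Fin n) (hij : i ≠ j) (hi : pid i ≠ n)
      (rv : Fin (1 - dacart c n i j).toNat → ℤ) (s : ℤ) :
      DRel c n
        (serreSum (1 - dacart c n i j).toNat (fun m => dXm i (rv m)) (dXm j s)
          (fun k => ((-1 : KK) ^ k) * qbinom (dqi c n i) (1 - dacart c n i j).toNat k)) 0
  -- Serre relation (C)
  | serreC_p (i j : Fin n) (hi : pid i = n)
      (hj : (c = Gcase.sl2 ∧ pid j ≠ n) ∨ (c ≠ Gcase.sl2 ∧ pid j + 1 < n))
      (rv : Fin (1 - dacart c n i j).toNat → ℤ) (s : ℤ) :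
      DRel c n
        (serreSum (1 - dacart c n i j).toNat (fun m => dXp i (rv m)) (dXp j s)
          (fun k => qbinom (ii * dqi c n i) (1 - dacart c n i j).toNat k)) 0
  | serreC_m (i j : Fin n) (hi : pid i = n)
      (hj : (c = Gcase.sl2 ∧ pid j ≠ n) ∨ (c ≠ Gcase.sl2 ∧ pid j + 1 < n))
      (rv : Fin (1 - dacart c n i j).toNat → ℤ) (s : ℤ) :
      DRel c n
        (serreSum (1 - dacart c n i j).toNat (fun m => dXm i (rv m)) (dXm j s)
          (fun k => qbinom (ii * dqi c n i) (1 - dacart c n i j).toNat k)) 0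
  -- Serre relations (D), only for osp(1|2n)^{(1)}
  | serreD1_p (hc : c = Gcase.osp1) (i : Fin n) (hi : pid i = n) (rv : Fin 3 → ℤ) :
      DRel c n
        (∑ σ : Equiv.Perm (Fin 3),
          sbr 0 1 (qpow 4)
            (sbr 1 1 (qpow 2) (dXp i (rv (σ 0) + 1)) (dXp i (rv (σ 1)))) (dXp i (rv (σ 2)))) 0
  | serreD1_m (hc : c = Gcase.osp1) (i : Fin n) (hi : pid i = n) (rv : Fin 3 → ℤ) :
      DRel c n
        (∑ σ : Equiv.Perm (Fin 3),
          sbr 0 1 (qpow 4)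
            (sbr 1 1 (qpow 2) (dXm i (rv (σ 0) - 1)) (dXm i (rv (σ 1)))) (dXm i (rv (σ 2)))) 0
  | serreD2_p (hc : c = Gcase.osp1) (i : Fin n) (hi : pid i = n) (rv : Fin 2 → ℤ) :
      DRel c n
        (∑ σ : Equiv.Perm (Fin 2),
          (sbr 1 1 (qpow 2) (dXp i (rv (σ 0) + 2)) (dXp i (rv (σ 1))) -
            qpow 4 • sbr 1 1 (qpow (-6)) (dXp i (rv (σ 0) + 1)) (dXp i (rv (σ 1) + 1)))) 0
  | serreD2_m (hc : c = Gcase.osp1) (i : Fin n) (hi : pid i = n) (rv : Fin 2 → ℤ) :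
      DRel c n
        (∑ σ : Equiv.Perm (Fin 2),
          (sbr 1 1 (qpow 2) (dXm i (rv (σ 0) - 2)) (dXm i (rv (σ 1))) -
            qpow 4 • sbr 1 1 (qpow (-6)) (dXm i (rv (σ 0) - 1)) (dXm i (rv (σ 1) - 1)))) 0
  | serreD3_p (hc : c = Gcase.osp1) (i i' : Fin n) (hi : pid i = n) (hi' : pid i' + 1 = n)
      (rv : Fin 2 → ℤ) (k : ℤ) :
      DRel c n
        (∑ σ : Equiv.Perm (Fin 2),
          (qpow 2 • sbr 0 0 (qpow 4)
              (sbr 1 1 (qpow 2) (dXp i (rv (σ 0) + 1)) (dXp i (rv (σ 1)))) (dXp i' k) +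
           (qpow 2 + qpow (-2)) • sbr 1 1 1
              (sbr 0 1 (qpow 2) (dXp i' k) (dXp i (rv (σ 0) + 1))) (dXp i (rv (σ 1))))) 0
  | serreD3_m (hc : c = Gcase.osp1) (i i' : Fin n) (hi : pid i = n) (hi' : pid i' + 1 = n)
      (rv : Fin 2 → ℤ) (k : ℤ) :
      DRel c n
        (∑ σ : Equiv.Perm (Fin 2),
          (qpow 2 • sbr 0 0 (qpow 4)
              (sbr 1 1 (qpow 2) (dXm i (rv (σ 0) - 1)) (dXm i (rv (σ 1)))) (dXm i' k) +
           (qpow 2 + qpow (-2)) • sbr 1 1 1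
              (sbr 0 1 (qpow 2) (dXm i' k) (dXm i (rv (σ 0) - 1))) (dXm i (rv (σ 1))))) 0
  -- Serre relation (E), only for osp(2|2n)^{(2)}
  | serreE_p (hc : c = Gcase.osp2) (i i' : Fin n) (hi : pid i = n) (hi' : pid i' + 1 = n)
      (rv : Fin 2 → ℤ) (k : ℤ) :
      DRel c n
        (∑ σ : Equiv.Perm (Fin 2),
          sbr 1 1 1 (sbr 0 1 (qpow 2) (dXp i' k) (dXp i (rv (σ 0) + 1))) (dXp i (rv (σ 1)))) 0
  | serreE_m (hc : c = Gcase.osp2) (i i' : Fin n) (hi : pid i = n) (hi' : pid i' + 1 = n)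
      (rv : Fin 2 → ℤ) (k : ℤ) :
      DRel c n
        (∑ σ : Equiv.Perm (Fin 2),
          sbr 1 1 1 (sbr 0 1 (qpow 2) (dXm i' k) (dXm i (rv (σ 0) - 1))) (dXm i (rv (σ 1)))) 0

/-- The Drinfeld superalgebra `U_q^D(g)`. -/
abbrev UqD (c : Gcase) (n : ℕ) : Type := RingQuot (DRel c n)

/-- the quotient map. -/
def dπ (c : Gcase) (n : ℕ) : DF n →ₐ[KK] UqD c n := RingQuot.mkAlgHom KK (DRel c n)

def vXp (c : Gcase) (n : ℕ) (i : Fin n) (r : ℤ) : UqD c n := dπ c n (dXp i r)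
def vXm (c : Gcase) (n : ℕ) (i : Fin n) (r : ℤ) : UqD c n := dπ c n (dXm i r)
def vGa (c : Gcase) (n : ℕ) (i : Fin n) : UqD c n := dπ c n (dGa i)
def vGai (c : Gcase) (n : ℕ) (i : Fin n) : UqD c n := dπ c n (dGai i)
def vKa (c : Gcase) (n : ℕ) (i : Fin n) (s : ℤ) : UqD c n := dπ c n (dKa i s)
def vGh (c : Gcase) (n : ℕ) : UqD c n := dπ c n (dGh n)
def vGhi (c : Gcase) (n : ℕ) : UqD c n := dπ c n (dGhi n)
/-- `γ = (γ^{1/2})²`. -/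
def vGam (c : Gcase) (n : ℕ) : UqD c n := vGh c n * vGh c n
/-- `γ⁻¹`. -/
def vGamInv (c : Gcase) (n : ℕ) : UqD c n := vGhi c n * vGhi c n

/-! ## The quantum affine superalgebra `U_q(g)` in the Chevalley presentation -/

/-- Chevalley generators `e_i`, `f_i`, `k_i`, `k_i⁻¹`, `0 ≤ i ≤ n`. -/
inductive CGen (n : ℕ) : Type
  | e : Fin (n + 1) → CGen n
  | f : Fin (n + 1) → CGen n
  | k : Fin (n + 1) → CGen n
  | ki : Fin (n + 1) → CGen n

abbrev CF (n : ℕ) : Type := FreeAlgebra KK (CGen n)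

def cE {n : ℕ} (i : Fin (n + 1)) : CF n := FreeAlgebra.ι KK (CGen.e i)
def cF {n : ℕ} (i : Fin (n + 1)) : CF n := FreeAlgebra.ι KK (CGen.f i)
def cK {n : ℕ} (i : Fin (n + 1)) : CF n := FreeAlgebra.ι KK (CGen.k i)
def cKi {n : ℕ} (i : Fin (n + 1)) : CF n := FreeAlgebra.ι KK (CGen.ki i)

def cB (c : Gcase) (n : ℕ) (i j : Fin (n + 1)) : ℤ := Bc c n (i : ℕ) (j : ℕ)
def cpar (c : Gcase) (n : ℕ) (i : Fin (n + 1)) : ℕ := pc c n (i : ℕ)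
def cqi (c : Gcase) (n : ℕ) (i : Fin (n + 1)) : KK := qpow (cB c n i i)
def cden (c : Gcase) (n : ℕ) (i : Fin (n + 1)) : KK := cqi c n i - (cqi c n i)⁻¹
def cacart (c : Gcase) (n : ℕ) (i j : Fin (n + 1)) : ℤ := 2 * cB c n i j / cB c n i i

/-- `Ad_{e_i}(x) = e_i x − (−1)^{[e_i][x]} k_i x k_i⁻¹ e_i` (`p` = parity of `x`). -/
def adE (c : Gcase) (n : ℕ) (i : Fin (n + 1)) (p : ℕ) (x : CF n) : CF n :=
  cE i * x - ((-1 : KK) ^ (cpar c n i * p)) • (cK i * x * cKi i * cE i)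

/-- `Ad_{f_i}(x) = f_i x − (−1)^{[f_i][x]} k_i⁻¹ x k_i f_i`. -/
def adF (c : Gcase) (n : ℕ) (i : Fin (n + 1)) (p : ℕ) (x : CF n) : CF n :=
  cF i * x - ((-1 : KK) ^ (cpar c n i * p)) • (cKi i * x * cK i * cF i)

/-- `(Ad_{e_i})^m (x)` for `x` of parity `p0` (with parity book-keeping). -/
def adEiter (c : Gcase) (n : ℕ) (i : Fin (n + 1)) (p0 : ℕ) : ℕ → CF n → CF n
  | 0, x => x
  | (m + 1), x => adE c n i (cpar c n i * m + p0) (adEiter c n i p0 m x)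

def adFiter (c : Gcase) (n : ℕ) (i : Fin (n + 1)) (p0 : ℕ) : ℕ → CF n → CF n
  | 0, x => x
  | (m + 1), x => adF c n i (cpar c n i * m + p0) (adFiter c n i p0 m x)

/-- Defining relations of the quantum affine superalgebra `U_q(g)` (Definition 2.1). -/
inductive CRel (c : Gcase) (n : ℕ) : CF n → CF n → Prop
  | k_ki (i : Fin (n + 1)) : CRel c n (cK i * cKi i) 1
  | ki_k (i : Fin (n + 1)) : CRel c n (cKi i * cK i) 1
  | k_comm (i j : Fin (n + 1)) : CRel c n (cK i * cK j) (cK j * cK i)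
  | k_e (i j : Fin (n + 1)) :
      CRel c n (cK i * cE j * cKi i) (qpow (2 * cB c n i j) • cE j)
  | k_f (i j : Fin (n + 1)) :
      CRel c n (cK i * cF j * cKi i) (qpow (-(2 * cB c n i j)) • cF j)
  | e_f (i j : Fin (n + 1)) :
      CRel c n (cE i * cF j - ((-1 : KK) ^ (cpar c n i * cpar c n j)) • (cF j * cE i))
        (if i = j then (cden c n i)⁻¹ • (cK i - cKi i) else 0)
  | serre_e (i j : Fin (n + 1)) (h : i ≠ j) :
      CRel c n (adEiter c n i (cpar c n j) (1 - cacart c n i j).toNat (cE j)) 0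
  | serre_f (i j : Fin (n + 1)) (h : i ≠ j) :
      CRel c n (adFiter c n i (cpar c n j) (1 - cacart c n i j).toNat (cF j)) 0

/-- The quantum affine superalgebra `U_q(g)`. -/
abbrev Uq (c : Gcase) (n : ℕ) : Type := RingQuot (CRel c n)

def cπ (c : Gcase) (n : ℕ) : CF n →ₐ[KK] Uq c n := RingQuot.mkAlgHom KK (CRel c n)

def wE (c : Gcase) (n : ℕ) (i : Fin (n + 1)) : Uq c n := cπ c n (cE i)
def wF (c : Gcase) (n : ℕ) (i : Fin (n + 1)) : Uq c n := cπ c n (cF i)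
def wK (c : Gcase) (n : ℕ) (i : Fin (n + 1)) : Uq c n := cπ c n (cK i)
def wKi (c : Gcase) (n : ℕ) (i : Fin (n + 1)) : Uq c n := cπ c n (cKi i)

/-! ## Adjoint chains in `U_q^D(g)` -/

/-- `Ad_{ξ⁻_{i,0}}(x) = ξ⁻_{i,0} x − (−1)^{[ξ⁻_{i,0}][x]} γ_i⁻¹ x γ_i ξ⁻_{i,0}`. -/
def AdXmQ (c : Gcase) (n : ℕ) (i : Fin n) (p : ℕ) (x : UqD c n) : UqD c n :=
  vXm c n i 0 * x -
    ((-1 : KK) ^ (dpar n i * p)) • (vGai c n i * x * vGa c n i * vXm c n i 0)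

/-- `Ad_{ξ⁺_{i,0}}(x) = ξ⁺_{i,0} x − (−1)^{[ξ⁺_{i,0}][x]} γ_i x γ_i⁻¹ ξ⁺_{i,0}`. -/
def AdXpQ (c : Gcase) (n : ℕ) (i : Fin n) (p : ℕ) (x : UqD c n) : UqD c n :=
  vXp c n i 0 * x -
    ((-1 : KK) ^ (dpar n i * p)) • (vGa c n i * x * vGai c n i * vXp c n i 0)

/-- iterated `Ad_{ξ⁻}` along a list of indices (head applied last), with parity
book-keeping: `p0` is the parity of the initial element `x`. -/
def adChainM (c : Gcase) (n : ℕ) : List (Fin n) → ℕ → UqD c n → UqD c n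
  | [], _, x => x
  | (i :: t), p0, x => AdXmQ c n i ((t.map (dpar n)).sum + p0) (adChainM c n t p0 x)

def adChainP (c : Gcase) (n : ℕ) : List (Fin n) → ℕ → UqD c n → UqD c n
  | [], _, x => x
  | (i :: t), p0, x => AdXpQ c n i ((t.map (dpar n)).sum + p0) (adChainP c n t p0 x)

/-- `m % n` as an element of `Fin n`. -/
def fnat (n : ℕ) [NeZero n] (m : ℕ) : Fin n :=
  ⟨m % n, Nat.mod_lt _ (Nat.pos_of_ne_zero (NeZero.ne n))⟩

def vKhatP (c : Gcase) (n : ℕ) (i : Fin n) (k : ℕ) : UqD c n := dπ c n (khatp c n i k)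
def vKhatM (c : Gcase) (n : ℕ) (i : Fin n) (k : ℕ) : UqD c n := dπ c n (khatm c n i k)


/-! ### Auxiliary material for Statement 11 -/

section Aut

lemma ii_ne_zero : (ii : KK) ≠ 0 := by
  have : Function.Injective (RatFunc.C : ℂ →+* RatFunc ℂ) := RingHom.injective _
  intro h
  exact Complex.I_ne_zero (this (by simpa [ii] using h))

lemma ii_mul_ii : (ii : KK) * ii = -1 := by
  rw [ii, ← map_mul, Complex.I_mul_I, map_neg, map_one]

lemma izp (a b : ℤ) : (ii : KK) ^ a * ii ^ b = ii ^ (a + b) := (zpow_add₀ ii_ne_zero a b).symm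

lemma ii_sq : (ii : KK) ^ (2 : ℤ) = -1 := by
  rw [show (2 : ℤ) = 1 + 1 by norm_num, zpow_add₀ ii_ne_zero, zpow_one, ii_mul_ii]

lemma ii2 (k : ℤ) : (ii : KK) ^ (2 * k) = (-1 : KK) ^ k := by
  rw [zpow_mul, ii_sq]

lemma n1zp (a b : ℤ) : (-1 : KK) ^ a * (-1 : KK) ^ b = (-1 : KK) ^ (a + b) :=
  (zpow_add₀ (by norm_num) a b).symm

lemma n1sq (k : ℤ) : (-1 : KK) ^ k * (-1 : KK) ^ k = 1 := by
  rw [n1zp, show k + k = 2 * k by ring, zpow_mul]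
  norm_num

lemma n1neg (k : ℤ) : (-1 : KK) ^ (-k) = (-1 : KK) ^ k := by
  rw [zpow_neg]
  exact inv_eq_of_mul_eq_one_right (n1sq k)

lemma n1abs (r : ℤ) : (-1 : KK) ^ |r| = (-1 : KK) ^ r := by
  rcases abs_choice r with h | h
  · rw [h]
  · rw [h, n1neg]

lemma n1e {e : ℤ} (he : Odd e) (k : ℤ) : (-1 : KK) ^ (e * k) = (-1 : KK) ^ k := by
  rw [zpow_mul, he.neg_one_zpow]

lemma ii_inv : (ii : KK)⁻¹ = -ii :=
  inv_eq_of_mul_eq_one_right (by rw [mul_neg, ii_mul_ii, neg_neg])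

/-- the character by which the automorphism rescales each generator. -/
def chi (n : ℕ) (e : ℤ) : DGen n → KK
  | .xp _ _ => 1
  | .xm _ r => (-1 : KK) ^ r
  | .ga _ => 1
  | .gai _ => 1
  | .ka _ s => ii ^ (e * |s|)
  | .gh => ii ^ (-e)
  | .ghi => ii ^ e

/-- the rescaling endomorphism of the free algebra. -/
def Mtw (n : ℕ) (e : ℤ) : DF n →ₐ[KK] DF n :=
  FreeAlgebra.lift KK (fun g => chi n e g • FreeAlgebra.ι KK g)

variable {n : ℕ}

lemma Mtw_ι (e : ℤ) (g : DGen n) :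
    Mtw n e (FreeAlgebra.ι KK g) = chi n e g • FreeAlgebra.ι KK g :=
  FreeAlgebra.lift_ι_apply _ _

lemma Mtw_xp (e : ℤ) (i : Fin n) (r : ℤ) : Mtw n e (dXp i r) = dXp i r := by
  simp [dXp, Mtw, chi]

lemma Mtw_xm (e : ℤ) (i : Fin n) (r : ℤ) :
    Mtw n e (dXm i r) = ((-1 : KK) ^ r) • dXm i r := by
  simp [dXm, Mtw, chi]

lemma Mtw_ga (e : ℤ) (i : Fin n) : Mtw n e (dGa i) = dGa i := by
  simp [dGa, Mtw, chi]

lemma Mtw_gai (e : ℤ) (i : Fin n) : Mtw n e (dGai i) = dGai i := by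
  simp [dGai, Mtw, chi]

lemma Mtw_ka (e : ℤ) (i : Fin n) (s : ℤ) :
    Mtw n e (dKa i s) = (ii ^ (e * |s|)) • dKa i s := by
  simp [dKa, Mtw, chi]

lemma Mtw_gh (e : ℤ) : Mtw n e (dGh n) = (ii ^ (-e)) • dGh n := by
  simp [dGh, Mtw, chi]

lemma Mtw_ghi (e : ℤ) : Mtw n e (dGhi n) = (ii ^ e) • dGhi n := by
  simp [dGhi, Mtw, chi]

lemma Mtw_gampow (e m : ℤ) : Mtw n e (dgampow n m) = (ii ^ (-(e * m))) • dgampow n m := by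
  unfold dgampow
  split_ifs with h
  · rw [map_pow, Mtw_gh, smul_pow, ← zpow_natCast ((ii : KK) ^ (-e)) m.toNat, ← zpow_mul,
      Int.toNat_of_nonneg h, show -e * m = -(e * m) by ring]
  · rw [map_pow, Mtw_ghi, smul_pow, ← zpow_natCast ((ii : KK) ^ e) (-m).toNat, ← zpow_mul,
      Int.toNat_of_nonneg (by omega), show e * -m = -(e * m) by ring]


lemma Mtw_khatp (c : Gcase) (e : ℤ) (i : Fin n) :
    ∀ k : ℕ, Mtw n e (khatp c n i k) = (ii ^ (e * (k : ℤ))) • khatp c n i k := by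
  intro k
  induction k using Nat.strong_induction_on with
  | _ k ih =>
    match k with
    | 0 => simp [khatp, Mtw_ga]
    | (m + 1) =>
      have hsum : ∀ r ∈ Finset.range (m + 1),
          Mtw n e ((((r : ℕ) + 1 : ℕ) : KK) • (dKa i ((r : ℤ) + 1) * khatp c n i (m - r)))
            = (ii ^ (e * ((m + 1 : ℕ) : ℤ)))
                • ((((r : ℕ) + 1 : ℕ) : KK) • (dKa i ((r : ℤ) + 1) * khatp c n i (m - r))) := by
        intro r hr
        have hrm : r ≤ m := Nat.lt_succ_iff.mp (Finset.mem_range.mp hr)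
        have hE : e * |(r : ℤ) + 1| + e * ((m - r : ℕ) : ℤ) = e * ((m + 1 : ℕ) : ℤ) := by
          rw [abs_of_nonneg (by positivity : (0:ℤ) ≤ (r : ℤ) + 1), Nat.cast_sub hrm]
          push_cast
          ring
        rw [map_smul, map_mul, Mtw_ka, ih (m - r) (Nat.lt_succ_of_le (Nat.sub_le m r)),
          smul_mul_smul_comm, izp, hE, smul_comm]
      rw [khatp, map_smul, map_smul, map_sum, Finset.sum_congr rfl hsum, ← Finset.smul_sum,
        smul_comm (dden c n i), smul_comm ((((m : KK)) + 1))⁻¹]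

lemma Mtw_khatm (c : Gcase) (e : ℤ) (i : Fin n) :
    ∀ k : ℕ, Mtw n e (khatm c n i k) = (ii ^ (e * (k : ℤ))) • khatm c n i k := by
  intro k
  induction k using Nat.strong_induction_on with
  | _ k ih =>
    match k with
    | 0 => simp [khatm, Mtw_gai]
    | (m + 1) =>
      have hsum : ∀ r ∈ Finset.range (m + 1),
          Mtw n e ((((r : ℕ) + 1 : ℕ) : KK) • (dKa i (-((r : ℤ) + 1)) * khatm c n i (m - r)))
            = (ii ^ (e * ((m + 1 : ℕ) : ℤ)))
                • ((((r : ℕ) + 1 : ℕ) : KK) • (dKa i (-((r : ℤ) + 1)) * khatm c n i (m - r))) := by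
        intro r hr
        have hrm : r ≤ m := Nat.lt_succ_iff.mp (Finset.mem_range.mp hr)
        have hE : e * |(-((r : ℤ) + 1))| + e * ((m - r : ℕ) : ℤ) = e * ((m + 1 : ℕ) : ℤ) := by
          rw [abs_neg, abs_of_nonneg (by positivity : (0:ℤ) ≤ (r : ℤ) + 1), Nat.cast_sub hrm]
          push_cast
          ring
        rw [map_smul, map_mul, Mtw_ka, ih (m - r) (Nat.lt_succ_of_le (Nat.sub_le m r)),
          smul_mul_smul_comm, izp, hE, smul_comm]
      rw [khatm, map_smul, map_smul, map_sum, Finset.sum_congr rfl hsum, ← Finset.smul_sum,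
        smul_comm (-(dden c n i)), smul_comm ((((m : KK)) + 1))⁻¹]

lemma Mtw_DKhatP (c : Gcase) (e : ℤ) (i : Fin n) (r : ℤ) :
    Mtw n e (DKhatP c n i r) = (ii ^ (e * r)) • DKhatP c n i r := by
  unfold DKhatP
  split_ifs with h
  · rw [Mtw_khatp, Int.toNat_of_nonneg h]
  · simp

lemma Mtw_DKhatM (c : Gcase) (e : ℤ) (i : Fin n) (r : ℤ) :
    Mtw n e (DKhatM c n i r) = (ii ^ (-(e * r))) • DKhatM c n i r := by
  unfold DKhatM
  split_ifs with h
  · rw [Mtw_khatm, Int.toNat_of_nonneg (by omega), show e * -r = -(e * r) by ring]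
  · simp

lemma map_sbr (Φ : DF n →ₐ[KK] DF n) (p q : ℕ) (a : KK) (x y : DF n) :
    Φ (sbr p q a x y) = sbr p q a (Φ x) (Φ y) := by
  simp [sbr]

lemma sbr_smul (p q : ℕ) (a u v : KK) (x y : DF n) :
    sbr p q a (u • x) (v • y) = (u * v) • sbr p q a x y := by
  simp only [sbr, smul_mul_smul_comm, smul_sub, smul_smul]
  congr 1
  congr 1
  ring

lemma zip_smul_prod : ∀ (s : List KK) (L : List (DF n)), s.length = L.length →
    (List.zipWith (· • ·) s L).prod = s.prod • L.prod
  | [], [], _ => by simp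
  | (a :: s), (x :: L), h => by
    rw [List.zipWith_cons_cons, List.prod_cons, List.prod_cons, List.prod_cons,
      zip_smul_prod s L (by simpa using h), smul_mul_smul_comm]

lemma ofFn_smul_zip {ℓ : ℕ} (cf : Fin ℓ → KK) (A : Fin ℓ → DF n) :
    (List.ofFn fun m => cf m • A m) = List.zipWith (· • ·) (List.ofFn cf) (List.ofFn A) := by
  apply List.ext_getElem <;> simp

lemma map_serreSum {ℓ : ℕ} (Φ : DF n →ₐ[KK] DF n) (A : Fin ℓ → DF n) (b : DF n)
    (coef : ℕ → KK) :
    Φ (serreSum ℓ A b coef) = serreSum ℓ (fun m => Φ (A m)) (Φ b) coef := by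
  unfold serreSum
  rw [map_sum]
  refine Finset.sum_congr rfl fun σ _ => ?_
  rw [map_sum]
  refine Finset.sum_congr rfl fun k _ => ?_
  rw [map_smul, map_mul, map_mul, map_list_prod, map_list_prod, List.map_take, List.map_drop,
    List.map_ofFn]
  rfl

lemma serreSum_smul {ℓ : ℕ} (cf : Fin ℓ → KK) (A : Fin ℓ → DF n) (d : KK) (b : DF n)
    (coef : ℕ → KK) :
    serreSum ℓ (fun m => cf m • A m) (d • b) coef
      = ((∏ m, cf m) * d) • serreSum ℓ A b coef := by
  unfold serreSum
  rw [Finset.smul_sum]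
  refine Finset.sum_congr rfl fun σ _ => ?_
  rw [Finset.smul_sum]
  refine Finset.sum_congr rfl fun k _ => ?_
  have h1 : (List.ofFn fun m => cf (σ m) • A (σ m))
      = List.zipWith (· • ·) (List.ofFn fun m => cf (σ m)) (List.ofFn fun m => A (σ m)) :=
    ofFn_smul_zip _ _
  have h2 : ((List.ofFn fun m => cf (σ m)).take k).prod
        * ((List.ofFn fun m => cf (σ m)).drop k).prod = ∏ m, cf m := by
    rw [← List.prod_append, List.take_append_drop, List.prod_ofFn]
    exact Equiv.prod_comp σ cf
  rw [h1, List.take_zipWith, List.drop_zipWith,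
    zip_smul_prod _ _ (by simp), zip_smul_prod _ _ (by simp),
    smul_mul_smul_comm, smul_mul_smul_comm, smul_smul, smul_smul]
  congr 1
  rw [← h2]
  ring


lemma Mtw_rel (c : Gcase) (hc : c = .osp1 ∨ c = .sl2) (e : ℤ) (he : Odd e)
    {a b : DF n} (h : DRel c n a b) : dπ c n (Mtw n e a) = dπ c n (Mtw n e b) := by
  have hosp2 : c ≠ .osp2 := by rcases hc with h' | h' <;> simp [h']
  have key : ∀ {x y : DF n}, DRel c n x y → dπ c n x = dπ c n y := fun hxy => by
    unfold dπ; exact RingQuot.mkAlgHom_rel KK hxy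
  cases h with
  | killxp i r h => exact absurd (Or.inl hosp2) h
  | killxm i r h => exact absurd (Or.inl hosp2) h
  | killka i r h =>
      rcases h with h | h
      · exact absurd (Or.inl hosp2) h
      · subst h
        have h0 : dπ c n (dKa i 0) = 0 := by
          rw [key (DRel.killka i 0 (Or.inr rfl)), map_zero]
        rw [Mtw_ka, map_smul, h0, smul_zero, map_zero, map_zero]
  | gh_ghi =>
      have hs : Mtw n e (dGh n * dGhi n) = dGh n * dGhi n := by
        rw [map_mul, Mtw_gh, Mtw_ghi, smul_mul_smul_comm, izp]
        simp
      rw [hs, map_one]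
      exact key DRel.gh_ghi
  | ghi_gh =>
      have hs : Mtw n e (dGhi n * dGh n) = dGhi n * dGh n := by
        rw [map_mul, Mtw_gh, Mtw_ghi, smul_mul_smul_comm, izp]
        simp
      rw [hs, map_one]
      exact key DRel.ghi_gh
  | gh_central g =>
      have hl : Mtw n e (dGh n * FreeAlgebra.ι KK g)
          = (ii ^ (-e) * chi n e g) • (dGh n * FreeAlgebra.ι KK g) := by
        rw [map_mul, Mtw_gh, Mtw_ι, smul_mul_smul_comm]
      have hr : Mtw n e (FreeAlgebra.ι KK g * dGh n)
          = (ii ^ (-e) * chi n e g) • (FreeAlgebra.ι KK g * dGh n) := by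
        rw [map_mul, Mtw_gh, Mtw_ι, smul_mul_smul_comm, mul_comm (chi n e g)]
      rw [hl, hr, map_smul, map_smul, key (DRel.gh_central g)]
  | ghi_central g =>
      have hl : Mtw n e (dGhi n * FreeAlgebra.ι KK g)
          = (ii ^ e * chi n e g) • (dGhi n * FreeAlgebra.ι KK g) := by
        rw [map_mul, Mtw_ghi, Mtw_ι, smul_mul_smul_comm]
      have hr : Mtw n e (FreeAlgebra.ι KK g * dGhi n)
          = (ii ^ e * chi n e g) • (FreeAlgebra.ι KK g * dGhi n) := by
        rw [map_mul, Mtw_ghi, Mtw_ι, smul_mul_smul_comm, mul_comm (chi n e g)]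
      rw [hl, hr, map_smul, map_smul, key (DRel.ghi_central g)]
  | ga_gai i =>
      have hl : Mtw n e (dGa i * dGai i) = dGa i * dGai i := by
        rw [map_mul, Mtw_ga, Mtw_gai]
      rw [hl, map_one]
      exact key (DRel.ga_gai i)
  | gai_ga i =>
      have hl : Mtw n e (dGai i * dGa i) = dGai i * dGa i := by
        rw [map_mul, Mtw_ga, Mtw_gai]
      rw [hl, map_one]
      exact key (DRel.gai_ga i)
  | ga_comm i j =>
      have hl : Mtw n e (dGa i * dGa j) = dGa i * dGa j := by
        rw [map_mul, Mtw_ga, Mtw_ga]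
      have hr : Mtw n e (dGa j * dGa i) = dGa j * dGa i := by
        rw [map_mul, Mtw_ga, Mtw_ga]
      rw [hl, hr]
      exact key (DRel.ga_comm i j)
  | ga_ka i j s =>
      have hl : Mtw n e (dGa i * dKa j s) = (ii ^ (e * |s|)) • (dGa i * dKa j s) := by
        rw [map_mul, Mtw_ga, Mtw_ka, mul_smul_comm]
      have hr : Mtw n e (dKa j s * dGa i) = (ii ^ (e * |s|)) • (dKa j s * dGa i) := by
        rw [map_mul, Mtw_ga, Mtw_ka, smul_mul_assoc]
      rw [hl, hr, map_smul, map_smul, key (DRel.ga_ka i j s)]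
  | ga_xp i j r =>
      have hl : Mtw n e (dGa i * dXp j r * dGai i) = dGa i * dXp j r * dGai i := by
        rw [map_mul, map_mul, Mtw_ga, Mtw_xp, Mtw_gai]
      have hr : Mtw n e (qpow (2 * dB c n i j) • dXp j r)
          = qpow (2 * dB c n i j) • dXp j r := by
        rw [map_smul, Mtw_xp]
      rw [hl, hr]
      exact key (DRel.ga_xp i j r)
  | ga_xm i j r =>
      have hl : Mtw n e (dGa i * dXm j r * dGai i)
          = ((-1 : KK) ^ r) • (dGa i * dXm j r * dGai i) := by
        rw [map_mul, map_mul, Mtw_ga, Mtw_xm, Mtw_gai, mul_smul_comm, smul_mul_assoc]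
      have hr : Mtw n e (qpow (-(2 * dB c n i j)) • dXm j r)
          = ((-1 : KK) ^ r) • (qpow (-(2 * dB c n i j)) • dXm j r) := by
        rw [map_smul, Mtw_xm, smul_comm]
      rw [hl, hr, map_smul, map_smul, key (DRel.ga_xm i j r)]
  | ka_xp i j r s hr0 =>
      have hl : Mtw n e (dKa i r * dXp j s - dXp j s * dKa i r)
          = (ii ^ (e * |r|)) • (dKa i r * dXp j s - dXp j s * dKa i r) := by
        rw [map_sub, map_mul, map_mul, Mtw_ka, Mtw_xp, smul_mul_assoc, mul_smul_comm, smul_sub]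
      have hr : Mtw n e ((du c n i j r / ((r : KK) * dden c n i))
            • (dgampow n (-|r|) * dXp j (s + r)))
          = (ii ^ (e * |r|)) • ((du c n i j r / ((r : KK) * dden c n i))
            • (dgampow n (-|r|) * dXp j (s + r))) := by
        rw [map_smul, map_mul, Mtw_gampow, Mtw_xp, smul_mul_assoc,
          show -(e * -|r|) = e * |r| by ring, smul_comm]
      rw [hl, hr, map_smul, map_smul, key (DRel.ka_xp i j r s hr0)]
  | ka_xm i j r s hr0 =>
      have hsc : (ii : KK) ^ (-(e * |r|)) * (-1 : KK) ^ (s + r) = ii ^ (e * |r|) * (-1 : KK) ^ s := by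
        rw [← n1zp, ← n1abs r, ← n1e he |r|, ← ii2 (e * |r|),
          mul_comm ((-1 : KK) ^ s) ((ii : KK) ^ (2 * (e * |r|))), ← mul_assoc, izp,
          show -(e * |r|) + 2 * (e * |r|) = e * |r| by ring]
      have hl : Mtw n e (dKa i r * dXm j s - dXm j s * dKa i r)
          = (ii ^ (e * |r|) * (-1 : KK) ^ s) • (dKa i r * dXm j s - dXm j s * dKa i r) := by
        rw [map_sub, map_mul, map_mul, Mtw_ka, Mtw_xm, smul_mul_smul_comm, smul_mul_smul_comm,
          mul_comm ((-1 : KK) ^ s) ((ii : KK) ^ (e * |r|)), ← smul_sub]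
      have hr : Mtw n e ((du c n i j r / ((r : KK) * dden c n i))
            • (dgampow n |r| * dXm j (s + r)))
          = (ii ^ (e * |r|) * (-1 : KK) ^ s) • ((du c n i j r / ((r : KK) * dden c n i))
            • (dgampow n |r| * dXm j (s + r))) := by
        rw [map_smul, map_mul, Mtw_gampow, Mtw_xm, smul_mul_smul_comm, hsc, smul_comm]
      rw [hl, hr, map_smul, map_smul, key (DRel.ka_xm i j r s hr0)]
  | ka_ka i j r s hr0 hs0 =>
      have hl : Mtw n e (dKa i r * dKa j s - dKa j s * dKa i r)
          = (ii ^ (e * |r|) * ii ^ (e * |s|)) • (dKa i r * dKa j s - dKa j s * dKa i r) := by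
        rw [map_sub, map_mul, map_mul, Mtw_ka, Mtw_ka, smul_mul_smul_comm, smul_mul_smul_comm,
          mul_comm ((ii : KK) ^ (e * |s|)) ((ii : KK) ^ (e * |r|)), ← smul_sub]
      by_cases hsr : s = -r
      · subst hsr
        have hscal : (ii : KK) ^ (e * |r|) * ii ^ (e * |(-r)|) = (-1 : KK) ^ r := by
          rw [abs_neg, izp, show e * |r| + e * |r| = 2 * (e * |r|) by ring, ii2, n1e he, n1abs]
        have hr2 : Mtw n e ((du c n i j r / ((r : KK) * dden c n i * dden c n j))
              • (dgampow n (2 * r) - dgampow n (-(2 * r))))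
            = ((-1 : KK) ^ r) • ((du c n i j r / ((r : KK) * dden c n i * dden c n j))
              • (dgampow n (2 * r) - dgampow n (-(2 * r)))) := by
          rw [map_smul, map_sub, Mtw_gampow, Mtw_gampow,
            show -(e * (2 * r)) = 2 * (-(e * r)) by ring,
            show -(e * (-(2 * r))) = 2 * (e * r) by ring,
            ii2, ii2, n1neg, n1e he, ← smul_sub, smul_comm]
        rw [if_pos rfl, hl, hscal, hr2, map_smul, map_smul,
          key (DRel.ka_ka i j r (-r) hr0 hs0), if_pos rfl]
      · rw [if_neg hsr, map_zero, map_zero, hl, map_smul, key (DRel.ka_ka i j r s hr0 hs0),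
          if_neg hsr, map_zero, smul_zero]
  | xpxm i j r s =>
      have hl : Mtw n e (dXp i r * dXm j s
            - ((-1 : KK) ^ (dpar n i * dpar n j)) • (dXm j s * dXp i r))
          = ((-1 : KK) ^ s) • (dXp i r * dXm j s
            - ((-1 : KK) ^ (dpar n i * dpar n j)) • (dXm j s * dXp i r)) := by
        rw [map_sub, map_mul, map_smul, map_mul, Mtw_xp, Mtw_xm, mul_smul_comm, smul_mul_assoc,
          smul_comm ((-1 : KK) ^ (dpar n i * dpar n j)), ← smul_sub]
      by_cases hij : i = j
      · subst hij
        have hr : Mtw n e ((dden c n i)⁻¹ • (dgampow n (r - s) * DKhatP c n i (r + s)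
              - dgampow n (s - r) * DKhatM c n i (r + s)))
            = ((-1 : KK) ^ s) • ((dden c n i)⁻¹ • (dgampow n (r - s) * DKhatP c n i (r + s)
              - dgampow n (s - r) * DKhatM c n i (r + s))) := by
          rw [map_smul, map_sub, map_mul, map_mul, Mtw_gampow, Mtw_gampow, Mtw_DKhatP,
            Mtw_DKhatM, smul_mul_smul_comm, smul_mul_smul_comm, izp, izp,
            show -(e * (r - s)) + e * (r + s) = 2 * (e * s) by ring,
            show -(e * (s - r)) + -(e * (r + s)) = 2 * (-(e * s)) by ring,
            ii2, ii2, n1neg, n1e he, ← smul_sub, smul_comm]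
        rw [if_pos rfl, hl, hr, map_smul, map_smul, key (DRel.xpxm i i r s), if_pos rfl]
      · rw [if_neg hij, map_zero, map_zero, hl, map_smul, key (DRel.xpxm i j r s),
          if_neg hij, map_zero, smul_zero]
  | serreA_p i j r s hA =>
      have hl : Mtw n e (sbr (dpar n i) (dpar n j) (qpow (2 * dB c n i j))
              (dXp i (r + dtheta c n i j)) (dXp j s)
            + sbr (dpar n j) (dpar n i) (qpow (2 * dB c n j i))
              (dXp j (s + dtheta c n i j)) (dXp i r))
          = sbr (dpar n i) (dpar n j) (qpow (2 * dB c n i j))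
              (dXp i (r + dtheta c n i j)) (dXp j s)
            + sbr (dpar n j) (dpar n i) (qpow (2 * dB c n j i))
              (dXp j (s + dtheta c n i j)) (dXp i r) := by
        rw [map_add, map_sbr, map_sbr, Mtw_xp, Mtw_xp, Mtw_xp, Mtw_xp]
      rw [hl, key (DRel.serreA_p i j r s hA)]
      simp
  | serreA_m i j r s hA =>
      have hl : Mtw n e (sbr (dpar n i) (dpar n j) (qpow (2 * dB c n i j))
              (dXm i (r - dtheta c n i j)) (dXm j s)
            + sbr (dpar n j) (dpar n i) (qpow (2 * dB c n j i))
              (dXm j (s - dtheta c n i j)) (dXm i r))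
          = ((-1 : KK) ^ (r + s - dtheta c n i j)) • (sbr (dpar n i) (dpar n j)
              (qpow (2 * dB c n i j)) (dXm i (r - dtheta c n i j)) (dXm j s)
            + sbr (dpar n j) (dpar n i) (qpow (2 * dB c n j i))
              (dXm j (s - dtheta c n i j)) (dXm i r)) := by
        rw [map_add, map_sbr, map_sbr, Mtw_xm, Mtw_xm, Mtw_xm, Mtw_xm, sbr_smul, sbr_smul,
          n1zp, n1zp, show r - dtheta c n i j + s = r + s - dtheta c n i j by ring,
          show s - dtheta c n i j + r = r + s - dtheta c n i j by ring, ← smul_add]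
      rw [hl, map_smul, key (DRel.serreA_m i j r s hA)]
      simp
  | serreB_p i j hij hi rv s =>
      rw [map_serreSum]
      simp only [Mtw_xp]
      rw [key (DRel.serreB_p i j hij hi rv s)]
      simp
  | serreB_m i j hij hi rv s =>
      rw [map_serreSum]
      simp only [Mtw_xm]
      have hl : serreSum (1 - dacart c n i j).toNat
            (fun m => ((-1 : KK)) ^ (rv m) • dXm i (rv m)) (((-1 : KK)) ^ s • dXm j s)
            (fun k => ((-1 : KK) ^ k) * qbinom (dqi c n i) (1 - dacart c n i j).toNat k)
          = ((∏ m, ((-1 : KK)) ^ (rv m)) * ((-1 : KK)) ^ s) • serreSum (1 - dacart c n i j).toNat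
              (fun m => dXm i (rv m)) (dXm j s)
              (fun k => ((-1 : KK) ^ k) * qbinom (dqi c n i) (1 - dacart c n i j).toNat k) :=
        serreSum_smul _ _ _ _ _
      rw [hl, map_smul, key (DRel.serreB_m i j hij hi rv s)]
      simp
  | serreC_p i j hi hj rv s =>
      rw [map_serreSum]
      simp only [Mtw_xp]
      rw [key (DRel.serreC_p i j hi hj rv s)]
      simp
  | serreC_m i j hi hj rv s =>
      rw [map_serreSum]
      simp only [Mtw_xm]
      have hl : serreSum (1 - dacart c n i j).toNat
            (fun m => ((-1 : KK)) ^ (rv m) • dXm i (rv m)) (((-1 : KK)) ^ s • dXm j s)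
            (fun k => qbinom (ii * dqi c n i) (1 - dacart c n i j).toNat k)
          = ((∏ m, ((-1 : KK)) ^ (rv m)) * ((-1 : KK)) ^ s) • serreSum (1 - dacart c n i j).toNat
              (fun m => dXm i (rv m)) (dXm j s)
              (fun k => qbinom (ii * dqi c n i) (1 - dacart c n i j).toNat k) :=
        serreSum_smul _ _ _ _ _
      rw [hl, map_smul, key (DRel.serreC_m i j hi hj rv s)]
      simp
  | serreD1_p hc1 i hi rv =>
      have hl : Mtw n e (∑ σ : Equiv.Perm (Fin 3), sbr 0 1 (qpow 4)
            (sbr 1 1 (qpow 2) (dXp i (rv (σ 0) + 1)) (dXp i (rv (σ 1)))) (dXp i (rv (σ 2))))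
          = ∑ σ : Equiv.Perm (Fin 3), sbr 0 1 (qpow 4)
            (sbr 1 1 (qpow 2) (dXp i (rv (σ 0) + 1)) (dXp i (rv (σ 1)))) (dXp i (rv (σ 2))) := by
        rw [map_sum]
        refine Finset.sum_congr rfl fun σ _ => ?_
        rw [map_sbr, map_sbr, Mtw_xp, Mtw_xp, Mtw_xp]
      rw [hl, key (DRel.serreD1_p hc1 i hi rv)]
      simp
  | serreD1_m hc1 i hi rv =>
      have hl : Mtw n e (∑ σ : Equiv.Perm (Fin 3), sbr 0 1 (qpow 4)
            (sbr 1 1 (qpow 2) (dXm i (rv (σ 0) - 1)) (dXm i (rv (σ 1)))) (dXm i (rv (σ 2))))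
          = ((-1 : KK) ^ (rv 0 + rv 1 + rv 2 - 1)) • ∑ σ : Equiv.Perm (Fin 3), sbr 0 1 (qpow 4)
            (sbr 1 1 (qpow 2) (dXm i (rv (σ 0) - 1)) (dXm i (rv (σ 1)))) (dXm i (rv (σ 2))) := by
        rw [map_sum, Finset.smul_sum]
        refine Finset.sum_congr rfl fun σ _ => ?_
        have hsum : rv (σ 0) + rv (σ 1) + rv (σ 2) = rv 0 + rv 1 + rv 2 := by
          simpa [Fin.sum_univ_three] using Equiv.sum_comp σ rv
        rw [map_sbr, map_sbr, Mtw_xm, Mtw_xm, Mtw_xm, sbr_smul, sbr_smul, n1zp, n1zp,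
          show rv (σ 0) - 1 + rv (σ 1) + rv (σ 2) = rv 0 + rv 1 + rv 2 - 1 by omega]
      rw [hl, map_smul, key (DRel.serreD1_m hc1 i hi rv)]
      simp
  | serreD2_p hc1 i hi rv =>
      have hl : Mtw n e (∑ σ : Equiv.Perm (Fin 2),
            (sbr 1 1 (qpow 2) (dXp i (rv (σ 0) + 2)) (dXp i (rv (σ 1))) -
              qpow 4 • sbr 1 1 (qpow (-6)) (dXp i (rv (σ 0) + 1)) (dXp i (rv (σ 1) + 1))))
          = ∑ σ : Equiv.Perm (Fin 2),
            (sbr 1 1 (qpow 2) (dXp i (rv (σ 0) + 2)) (dXp i (rv (σ 1))) -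
              qpow 4 • sbr 1 1 (qpow (-6)) (dXp i (rv (σ 0) + 1)) (dXp i (rv (σ 1) + 1))) := by
        rw [map_sum]
        refine Finset.sum_congr rfl fun σ _ => ?_
        rw [map_sub, map_sbr, map_smul, map_sbr, Mtw_xp, Mtw_xp, Mtw_xp, Mtw_xp]
      rw [hl, key (DRel.serreD2_p hc1 i hi rv)]
      simp
  | serreD2_m hc1 i hi rv =>
      have hl : Mtw n e (∑ σ : Equiv.Perm (Fin 2),
            (sbr 1 1 (qpow 2) (dXm i (rv (σ 0) - 2)) (dXm i (rv (σ 1))) -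
              qpow 4 • sbr 1 1 (qpow (-6)) (dXm i (rv (σ 0) - 1)) (dXm i (rv (σ 1) - 1))))
          = ((-1 : KK) ^ (rv 0 + rv 1 - 2)) • ∑ σ : Equiv.Perm (Fin 2),
            (sbr 1 1 (qpow 2) (dXm i (rv (σ 0) - 2)) (dXm i (rv (σ 1))) -
              qpow 4 • sbr 1 1 (qpow (-6)) (dXm i (rv (σ 0) - 1)) (dXm i (rv (σ 1) - 1))) := by
        rw [map_sum, Finset.smul_sum]
        refine Finset.sum_congr rfl fun σ _ => ?_
        have hsum : rv (σ 0) + rv (σ 1) = rv 0 + rv 1 := by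
          simpa [Fin.sum_univ_two] using Equiv.sum_comp σ rv
        rw [map_sub, map_sbr, map_smul, map_sbr, Mtw_xm, Mtw_xm, Mtw_xm, Mtw_xm, sbr_smul,
          sbr_smul, n1zp, n1zp,
          show rv (σ 0) - 2 + rv (σ 1) = rv 0 + rv 1 - 2 by omega,
          show rv (σ 0) - 1 + (rv (σ 1) - 1) = rv 0 + rv 1 - 2 by omega,
          smul_comm (qpow 4), ← smul_sub]
      rw [hl, map_smul, key (DRel.serreD2_m hc1 i hi rv)]
      simp
  | serreD3_p hc1 i i' hi hi' rv k =>
      have hl : Mtw n e (∑ σ : Equiv.Perm (Fin 2),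
            (qpow 2 • sbr 0 0 (qpow 4)
                (sbr 1 1 (qpow 2) (dXp i (rv (σ 0) + 1)) (dXp i (rv (σ 1)))) (dXp i' k) +
              (qpow 2 + qpow (-2)) • sbr 1 1 1
                (sbr 0 1 (qpow 2) (dXp i' k) (dXp i (rv (σ 0) + 1))) (dXp i (rv (σ 1)))))
          = ∑ σ : Equiv.Perm (Fin 2),
            (qpow 2 • sbr 0 0 (qpow 4)
                (sbr 1 1 (qpow 2) (dXp i (rv (σ 0) + 1)) (dXp i (rv (σ 1)))) (dXp i' k) +
              (qpow 2 + qpow (-2)) • sbr 1 1 1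
                (sbr 0 1 (qpow 2) (dXp i' k) (dXp i (rv (σ 0) + 1))) (dXp i (rv (σ 1)))) := by
        rw [map_sum]
        refine Finset.sum_congr rfl fun σ _ => ?_
        rw [map_add, map_smul, map_smul, map_sbr, map_sbr, map_sbr, map_sbr, Mtw_xp, Mtw_xp,
          Mtw_xp]
      rw [hl, key (DRel.serreD3_p hc1 i i' hi hi' rv k)]
      simp
  | serreD3_m hc1 i i' hi hi' rv k =>
      have hl : Mtw n e (∑ σ : Equiv.Perm (Fin 2),
            (qpow 2 • sbr 0 0 (qpow 4)
                (sbr 1 1 (qpow 2) (dXm i (rv (σ 0) - 1)) (dXm i (rv (σ 1)))) (dXm i' k) +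
              (qpow 2 + qpow (-2)) • sbr 1 1 1
                (sbr 0 1 (qpow 2) (dXm i' k) (dXm i (rv (σ 0) - 1))) (dXm i (rv (σ 1)))))
          = ((-1 : KK) ^ (rv 0 + rv 1 + k - 1)) • ∑ σ : Equiv.Perm (Fin 2),
            (qpow 2 • sbr 0 0 (qpow 4)
                (sbr 1 1 (qpow 2) (dXm i (rv (σ 0) - 1)) (dXm i (rv (σ 1)))) (dXm i' k) +
              (qpow 2 + qpow (-2)) • sbr 1 1 1
                (sbr 0 1 (qpow 2) (dXm i' k) (dXm i (rv (σ 0) - 1))) (dXm i (rv (σ 1)))) := by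
        rw [map_sum, Finset.smul_sum]
        refine Finset.sum_congr rfl fun σ _ => ?_
        have hsum : rv (σ 0) + rv (σ 1) = rv 0 + rv 1 := by
          simpa [Fin.sum_univ_two] using Equiv.sum_comp σ rv
        rw [map_add, map_smul, map_smul, map_sbr, map_sbr, map_sbr, map_sbr, Mtw_xm, Mtw_xm,
          Mtw_xm, sbr_smul, sbr_smul, sbr_smul, sbr_smul, n1zp, n1zp, n1zp, n1zp,
          show rv (σ 0) - 1 + rv (σ 1) + k = rv 0 + rv 1 + k - 1 by omega,
          show k + (rv (σ 0) - 1) + rv (σ 1) = rv 0 + rv 1 + k - 1 by omega,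
          smul_comm (qpow 2), smul_comm (qpow 2 + qpow (-2)), ← smul_add]
      rw [hl, map_smul, key (DRel.serreD3_m hc1 i i' hi hi' rv k)]
      simp
  | serreE_p hc2 i i' hi hi' rv k => exact absurd hc2 hosp2
  | serreE_m hc2 i i' hi hi' rv k => exact absurd hc2 hosp2


/-- the induced endomorphism of `U_q^D(g)`. -/
def Ftw (c : Gcase) (n : ℕ) (hc : c = .osp1 ∨ c = .sl2) (e : ℤ) (he : Odd e) :
    UqD c n →ₐ[KK] UqD c n :=
  RingQuot.liftAlgHom KK ⟨(dπ c n).comp (Mtw n e), fun x y h => by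
    simpa using Mtw_rel c hc e he h⟩

lemma Ftw_π (c : Gcase) (hc : c = .osp1 ∨ c = .sl2) (e : ℤ) (he : Odd e) (x : DF n) :
    Ftw c n hc e he (dπ c n x) = dπ c n (Mtw n e x) := by
  have h1 : dπ c n x = RingQuot.mkAlgHom KK (DRel c n) x := rfl
  rw [h1]
  unfold Ftw
  rw [RingQuot.liftAlgHom_mkAlgHom_apply]
  rfl

lemma chi_inv (e : ℤ) (g : DGen n) : chi n e g * chi n (-e) g = 1 := by
  cases g with
  | xp i r => simp [chi]
  | xm i r => exact n1sq r
  | ga i => simp [chi]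
  | gai i => simp [chi]
  | ka i s =>
      show (ii : KK) ^ (e * |s|) * ii ^ (-e * |s|) = 1
      rw [izp, show e * |s| + -e * |s| = 0 by ring, zpow_zero]
  | gh =>
      show (ii : KK) ^ (-e) * ii ^ (-(-e)) = 1
      rw [izp, show -e + -(-e) = 0 by ring, zpow_zero]
  | ghi =>
      show (ii : KK) ^ e * ii ^ (-e) = 1
      rw [izp, show e + -e = 0 by ring, zpow_zero]

lemma Ftw_comp (c : Gcase) (hc : c = .osp1 ∨ c = .sl2) (e e' : ℤ) (he : Odd e) (he' : Odd e')
    (hee : e' = -e) :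
    (Ftw c n hc e he).comp (Ftw c n hc e' he') = AlgHom.id KK (UqD c n) := by
  subst hee
  apply RingQuot.ringQuot_ext'
  apply FreeAlgebra.hom_ext
  funext g
  show Ftw c n hc e he (Ftw c n hc (-e) he' (dπ c n (FreeAlgebra.ι KK g)))
      = dπ c n (FreeAlgebra.ι KK g)
  rw [Ftw_π, Mtw_ι, map_smul, map_smul, Ftw_π, Mtw_ι, map_smul, smul_smul, mul_comm,
    chi_inv e g, one_smul]

end Aut

/-- For `g = osp(1|2n)^{(1)}` or `sl(1|2n)^{(2)}`, the assignments
`γ^{1/2} ↦ −√−1·γ^{1/2}` (so `γ ↦ −γ`), `ξ⁺_{i,k} ↦ ξ⁺_{i,k}`, `ξ⁻_{i,k} ↦ (−1)^k ξ⁻_{i,k}`,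
`γ_i^{±1} ↦ γ_i^{±1}`, `κ_{i,k} ↦ (√−1)^{|k|} κ_{i,k}` extend to a `K`-superalgebra
automorphism of the Drinfeld superalgebra `U_q^D(g)`; under this automorphism
`κ̂⁺_{i,k} ↦ (√−1)^k κ̂⁺_{i,k}` and `κ̂⁻_{i,−k} ↦ (√−1)^k κ̂⁻_{i,−k}` for all `k ≥ 0`. -/
theorem drinfeld_superalgebra_automorphism (c : Gcase) (n : ℕ) [NeZero n]
    (hc : c = Gcase.osp1 ∨ c = Gcase.sl2) :
    ∃ φ : UqD c n ≃ₐ[KK] UqD c n,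
      φ (vGh c n) = (-ii) • vGh c n ∧
      (∀ (i : Fin n) (k : ℤ), φ (vXp c n i k) = vXp c n i k) ∧
      (∀ (i : Fin n) (k : ℤ), φ (vXm c n i k) = ((-1 : KK) ^ k) • vXm c n i k) ∧
      (∀ i : Fin n, φ (vGa c n i) = vGa c n i) ∧
      (∀ i : Fin n, φ (vGai c n i) = vGai c n i) ∧
      (∀ (i : Fin n) (k : ℤ), k ≠ 0 → φ (vKa c n i k) = (ii ^ |k|) • vKa c n i k) ∧
      (∀ (i : Fin n) (k : ℕ), φ (vKhatP c n i k) = (ii ^ k) • vKhatP c n i k) ∧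
      (∀ (i : Fin n) (k : ℕ), φ (vKhatM c n i k) = (ii ^ k) • vKhatM c n i k) := by
  have he1 : Odd (1 : ℤ) := ⟨0, by ring⟩
  have hem : Odd (-1 : ℤ) := ⟨-1, by ring⟩
  refine ⟨AlgEquiv.ofAlgHom (Ftw c n hc 1 he1) (Ftw c n hc (-1) hem)
      (Ftw_comp c hc 1 (-1) he1 hem rfl) (Ftw_comp c hc (-1) 1 hem he1 (by ring)),
      ?_, ?_, ?_, ?_, ?_, ?_, ?_, ?_⟩
  · show Ftw c n hc 1 he1 (dπ c n (dGh n)) = (-ii) • dπ c n (dGh n)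
    rw [Ftw_π, Mtw_gh, map_smul, show (ii : KK) ^ (-1 : ℤ) = -ii by
      rw [zpow_neg, zpow_one, ii_inv]]
  · intro i k
    show Ftw c n hc 1 he1 (dπ c n (dXp i k)) = dπ c n (dXp i k)
    rw [Ftw_π, Mtw_xp]
  · intro i k
    show Ftw c n hc 1 he1 (dπ c n (dXm i k)) = ((-1 : KK) ^ k) • dπ c n (dXm i k)
    rw [Ftw_π, Mtw_xm, map_smul]
  · intro i
    show Ftw c n hc 1 he1 (dπ c n (dGa i)) = dπ c n (dGa i)
    rw [Ftw_π, Mtw_ga]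
  · intro i
    show Ftw c n hc 1 he1 (dπ c n (dGai i)) = dπ c n (dGai i)
    rw [Ftw_π, Mtw_gai]
  · intro i k _
    show Ftw c n hc 1 he1 (dπ c n (dKa i k)) = (ii ^ |k|) • dπ c n (dKa i k)
    rw [Ftw_π, Mtw_ka, map_smul, one_mul]
  · intro i k
    show Ftw c n hc 1 he1 (dπ c n (khatp c n i k)) = (ii ^ k) • dπ c n (khatp c n i k)
    rw [Ftw_π, Mtw_khatp, map_smul, one_mul, zpow_natCast]
  · intro i k
    show Ftw c n hc 1 he1 (dπ c n (khatm c n i k)) = (ii ^ k) • dπ c n (khatm c n i k)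
    rw [Ftw_π, Mtw_khatm, map_smul, one_mul, zpow_natCast]
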